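/- For all k ≥ 0 and n ≥ 0, ad_V^n([y^k V, W]) = y^{k+n}·p^{(n+2)}(z)·H - (k+n)·y^{k-1+n}·p^{(n+1)}(z)·V. -/

import Mathlib

open Polynomial

set_option synthInstance.maxHeartbeats 1000000
set_option maxHeartbeats 1000000

noncomputable section

/-- Coordinate ring of the Danielewski surface `x y = p(z)`. -/
abbrev DS (p : Polynomial ℂ) : Type :=
  MvPolynomial (Fin 3) ℂ ⧸
    Ideal.span ({MvPolynomial.X 0 * MvPolynomial.X 1 -
      Polynomial.aeval (MvPolynomial.X 2) p} : Set (MvPolynomial (Fin 3) ℂ))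

def dsX (p : Polynomial ℂ) : DS p := Ideal.Quotient.mk _ (MvPolynomial.X 0)
def dsY (p : Polynomial ℂ) : DS p := Ideal.Quotient.mk _ (MvPolynomial.X 1)
def dsZ (p : Polynomial ℂ) : DS p := Ideal.Quotient.mk _ (MvPolynomial.X 2)

abbrev dsI (p : Polynomial ℂ) : Ideal (MvPolynomial (Fin 3) ℂ) :=
  Ideal.span ({MvPolynomial.X 0 * MvPolynomial.X 1 -
      Polynomial.aeval (MvPolynomial.X 2) p} : Set (MvPolynomial (Fin 3) ℂ))

lemma ds_adjoin_top (p : Polynomial ℂ) :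
    Algebra.adjoin ℂ ({dsX p, dsY p, dsZ p} : Set (DS p)) = ⊤ := by
  rw [eq_top_iff]
  rintro a -
  obtain ⟨q, rfl⟩ := Ideal.Quotient.mk_surjective a
  have hq : (Ideal.Quotient.mkₐ ℂ (dsI p)) q ∈
      Algebra.adjoin ℂ ((Ideal.Quotient.mkₐ ℂ (dsI p)) ''
        (Set.range (MvPolynomial.X : Fin 3 → MvPolynomial (Fin 3) ℂ))) := by
    rw [Algebra.adjoin_image, MvPolynomial.adjoin_range_X]
    exact ⟨q, trivial, rfl⟩
  refine Algebra.adjoin_mono ?_ hq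
  rintro b ⟨-, ⟨i, rfl⟩, rfl⟩
  fin_cases i
  · exact Or.inl rfl
  · exact Or.inr (Or.inl rfl)
  · exact Or.inr (Or.inr rfl)

lemma ds_ext {p : Polynomial ℂ} {D1 D2 : Derivation ℂ (DS p) (DS p)}
    (hx : D1 (dsX p) = D2 (dsX p)) (hy : D1 (dsY p) = D2 (dsY p))
    (hz : D1 (dsZ p) = D2 (dsZ p)) : D1 = D2 := by
  refine Derivation.ext_of_adjoin_eq_top _ (ds_adjoin_top p) ?_
  rintro b (rfl | rfl | rfl) <;> assumption

lemma lie_smul_right' {p : Polynomial ℂ} (a : DS p) (D E : Derivation ℂ (DS p) (DS p)) :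
    ⁅D, a • E⁆ = a • ⁅D, E⁆ + (D a) • E := by
  ext b
  simp only [Derivation.commutator_apply, Derivation.add_apply, Derivation.smul_apply,
    Derivation.leibniz, smul_eq_mul]
  ring

lemma lie_smul_left' {p : Polynomial ℂ} (a : DS p) (D E : Derivation ℂ (DS p) (DS p)) :
    ⁅a • D, E⁆ = a • ⁅D, E⁆ - (E a) • D := by
  ext b
  simp only [Derivation.commutator_apply, Derivation.sub_apply, Derivation.smul_apply,
    Derivation.leibniz, smul_eq_mul]
  ring

lemma csmul_eq {p : Polynomial ℂ} (c : ℂ) (a : DS p) :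
    c • a = algebraMap ℂ (DS p) c * a := by
  rw [algebra_compatible_smul (DS p) c a, smul_eq_mul]

/-- for all `k, n ≥ 0`,
`ad_V^n([y^k V, W]) = y^(k+n)·p^(n+2)·H - (k+n)·y^(k+n-1)·p^(n+1)·V`. -/
theorem adV_iter_ykVW (p : Polynomial ℂ)
    (V W H : Derivation ℂ (DS p) (DS p))
    (hVx : V (dsX p) = Polynomial.aeval (dsZ p) (derivative p))
    (hVy : V (dsY p) = 0) (hVz : V (dsZ p) = dsY p)
    (hWx : W (dsX p) = 0)
    (hWy : W (dsY p) = Polynomial.aeval (dsZ p) (derivative p))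
    (hWz : W (dsZ p) = dsX p)
    (hHx : H (dsX p) = -dsX p) (hHy : H (dsY p) = dsY p)
    (hHz : H (dsZ p) = 0) :
    ∀ k n : ℕ,
      (fun X => ⁅V, X⁆)^[n] ⁅(dsY p ^ k) • V, W⁆ =
        (dsY p ^ (k + n) *
            Polynomial.aeval (dsZ p) ((fun q => derivative q)^[n+2] p)) • H -
        ((((k : ℂ) + n)) • (dsY p ^ (k + n - 1) *
            Polynomial.aeval (dsZ p) ((fun q => derivative q)^[n+1] p))) • V := by
  -- evaluation of V and W on y^m * A(z)
  have hVA : ∀ A : Polynomial ℂ, V (Polynomial.aeval (dsZ p) A) =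
      Polynomial.aeval (dsZ p) (derivative A) * dsY p := by
    intro A
    rw [Derivation.map_aeval, hVz, smul_eq_mul]
  have hHA : ∀ A : Polynomial ℂ, H (Polynomial.aeval (dsZ p) A) = 0 := by
    intro A
    rw [Derivation.map_aeval, hHz, smul_zero]
  have hWA : ∀ A : Polynomial ℂ, W (Polynomial.aeval (dsZ p) A) =
      Polynomial.aeval (dsZ p) (derivative A) * dsX p := by
    intro A
    rw [Derivation.map_aeval, hWz, smul_eq_mul]
  have hVyA : ∀ (m : ℕ) (A : Polynomial ℂ),
      V (dsY p ^ m * Polynomial.aeval (dsZ p) A) =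
        dsY p ^ (m + 1) * Polynomial.aeval (dsZ p) (derivative A) := by
    intro m A
    rw [Derivation.leibniz, hVA, Derivation.leibniz_pow, hVy]
    simp [smul_eq_mul, pow_succ]
    ring
  -- ⁅V, H⁆ = -V
  have hVH : ⁅V, H⁆ = -V := by
    refine ds_ext ?_ ?_ ?_ <;>
      simp only [Derivation.commutator_apply, Derivation.neg_apply, hVx, hVy, hVz, hHx, hHy, hHz,
        map_neg, map_zero, hHA, hVA]
    · simp
    · simp [hVy]
    · simp [hVy]
  -- ⁅V, W⁆ = p'' • H
  have hVW : ⁅V, W⁆ =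
      (Polynomial.aeval (dsZ p) (derivative (derivative p))) • H := by
    refine ds_ext ?_ ?_ ?_ <;>
      simp only [Derivation.commutator_apply, Derivation.smul_apply, hVx, hVy, hVz, hWx, hWy, hWz,
        hHx, hHy, hHz, map_zero, hWA, hVA, smul_eq_mul]
    · ring
    · ring
    · ring
  intro k n
  induction n with
  | zero =>
    simp only [Function.iterate_zero, id_eq, Nat.add_zero, Nat.cast_zero, add_zero]
    have h2 : (fun q => derivative q)^[0+2] p = derivative (derivative p) := by
      simp [Function.iterate_succ_apply']
    have h1 : (fun q => derivative q)^[0+1] p = derivative p := by simp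
    rw [h2, h1, lie_smul_left', hVW, Derivation.leibniz_pow, hWy]
    ext b
    simp only [Derivation.sub_apply, Derivation.add_apply, Derivation.smul_apply,
      Derivation.neg_apply, Derivation.zero_apply, smul_eq_mul, csmul_eq,
      map_natCast, map_add, map_one, nsmul_eq_mul]
    ring
  | succ n ih =>
    rw [Function.iterate_succ_apply', ih]
    have hd3 : derivative ((fun q => derivative q)^[n+2] p) = (fun q => derivative q)^[n+3] p :=
      (Function.iterate_succ_apply' _ _ _).symm
    have hd2 : derivative ((fun q => derivative q)^[n+1] p) = (fun q => derivative q)^[n+2] p :=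
      (Function.iterate_succ_apply' _ _ _).symm
    have key : dsY p ^ (k+n) * Polynomial.aeval (dsZ p) ((fun q => derivative q)^[n+2] p)
          + ((k:ℂ)+n) • (dsY p ^ (k+n-1+1) * Polynomial.aeval (dsZ p) ((fun q => derivative q)^[n+2] p))
        = ((k:ℂ)+(n+1)) • (dsY p ^ (k+n) * Polynomial.aeval (dsZ p) ((fun q => derivative q)^[n+2] p)) := by
      rcases Nat.eq_zero_or_pos (k + n) with h | h
      · obtain ⟨hk, hn⟩ := Nat.add_eq_zero.mp h
        subst hk; subst hn
        norm_num
      · rw [Nat.sub_add_cancel h]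
        simp only [csmul_eq, map_add, map_one, map_natCast]
        ring
    rw [show k+(n+1)-1 = k+n by omega, show k+(n+1) = k+n+1 by omega,
      show n+1+2 = n+3 by omega, show n+1+1 = n+2 by omega]
    rw [(show ∀ A B : Derivation ℂ (DS p) (DS p), ⁅V, A - B⁆ = ⁅V, A⁆ - ⁅V, B⁆ from
        fun A B => lie_sub V A B), lie_smul_right', lie_smul_right',
      (show ⁅V, V⁆ = 0 from lie_self V), smul_zero, hVH,
      Derivation.map_smul, hVyA, hVyA, hd3, hd2,
      show ((n+1:ℕ):ℂ) = (n:ℂ)+1 by push_cast; ring, ← key]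
    ext b
    simp only [Derivation.sub_apply, Derivation.add_apply, Derivation.smul_apply,
      Derivation.neg_apply, Derivation.zero_apply, smul_eq_mul, csmul_eq,
      map_natCast, map_add, map_one]
    ring
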